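/- arXiv:2507.15047 — 2 statements merged into one kernel-verified Lean document; each statement's English description precedes it below -/
import Mathlib

section
/- (Small-gain theorem, backward case) Let Ψ : D ⇉ Y1 × Y2 be the feedback interconnection of Ψ1 : Y2 × U1 ⇉ Y1 and Ψ2 : Y1 × U2 ⇉ Y2 with D = U1 × U2, i.e., Ψ(d1,d2) = { (y1,y2) : y1 ∈ Ψ1(y2,d1), y2 ∈ Ψ2(y1,d2) }. Let A, B be families of subsets of D and Y1 × Y2. Suppose the backward small-gain property holds: for each B' ∈ B there exists A' ∈ A such that for every (y1,y2) ∉ B' there exist n1, n2 ≥ 1 with Γ12^{n1}(y1,A') × Γ21^{n2}(y2,A') ⊆ B'. Then Ψ is backward (↑A, B)-stable: Ψ⁻(B') ∈ ↑A for every B' ∈ B. -/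
open Set

def IsFilterFam {X : Type*} (F : Set (Set X)) : Prop :=
  F.Nonempty ∧ (∀ A B : Set X, A ∈ F → A ⊆ B → B ∈ F) ∧
    (∀ A B : Set X, A ∈ F → B ∈ F → A ∩ B ∈ F)

def IsIdealFam {X : Type*} (I : Set (Set X)) : Prop :=
  I.Nonempty ∧ (∀ A B : Set X, A ∈ I → B ⊆ A → B ∈ I) ∧
    (∀ A B : Set X, A ∈ I → B ∈ I → A ∪ B ∈ I)

def downcl {X : Type*} (C : Set (Set X)) : Set (Set X) := {S | ∃ B ∈ C, S ⊆ B}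

def upcl {X : Type*} (C : Set (Set X)) : Set (Set X) := {S | ∃ B ∈ C, B ⊆ S}

def otimes {X Y : Type*} (C1 : Set (Set X)) (C2 : Set (Set Y)) : Set (Set (X × Y)) :=
  {S | ∃ A ∈ C1, ∃ B ∈ C2, S = A ×ˢ B}

def img {D Y : Type*} (Ψ : D → Set Y) (S : Set D) : Set Y := ⋃ d ∈ S, Ψ d

def uinv {D Y : Type*} (Ψ : D → Set Y) (V : Set Y) : Set D := {d | Ψ d ⊆ V}

def nbds {X : Type*} [TopologicalSpace X] (S : Set X) : Set (Set X) :=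
  {N | ∃ O : Set X, IsOpen O ∧ S ⊆ O ∧ O ⊆ N}

variable {Y1 Y2 U1 U2 : Type*}

def fb (Ψ1 : Y2 × U1 → Set Y1) (Ψ2 : Y1 × U2 → Set Y2) (d : U1 × U2) :
    Set (Y1 × Y2) :=
  {y | y.1 ∈ Ψ1 (y.2, d.1) ∧ y.2 ∈ Ψ2 (y.1, d.2)}

def Ups1 (Ψ1 : Y2 × U1 → Set Y1) (Ψ2 : Y1 × U2 → Set Y2) (A : Set (U1 × U2)) :
    Set Y1 :=
  {y1 | ∃ d ∈ A, ∃ y2, (y1, y2) ∈ fb Ψ1 Ψ2 d}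

def Ups2 (Ψ1 : Y2 × U1 → Set Y1) (Ψ2 : Y1 × U2 → Set Y2) (A : Set (U1 × U2)) :
    Set Y2 :=
  {y2 | ∃ d ∈ A, ∃ y1, (y1, y2) ∈ fb Ψ1 Ψ2 d}

def Gam12 (Ψ1 : Y2 × U1 → Set Y1) (Ψ2 : Y1 × U2 → Set Y2)
    (y1 : Y1) (d : U1 × U2) : Set Y1 :=
  ⋃ y2 ∈ Ψ2 (y1, d.2), Ψ1 (y2, d.1)

def Gam21 (Ψ1 : Y2 × U1 → Set Y1) (Ψ2 : Y1 × U2 → Set Y2)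
    (y2 : Y2) (d : U1 × U2) : Set Y2 :=
  ⋃ y1 ∈ Ψ1 (y2, d.1), Ψ2 (y1, d.2)

def gpow {Y P : Type*} (Γ : Y → P → Set Y) : ℕ → Y → P → Set Y
  | 0, y, _ => {y}
  | n + 1, y, d => ⋃ z ∈ gpow Γ n y d, Γ z d

def gpowSet {Y U1 U2 : Type*} (Γ : Y → U1 × U2 → Set Y) (n : ℕ) (y : Y)
    (A : Set (U1 × U2)) : Set Y :=
  ⋃ d ∈ A, gpow Γ n y d


lemma mem_gpow12 (Ψ1 : Y2 × U1 → Set Y1) (Ψ2 : Y1 × U2 → Set Y2)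
    {y1 : Y1} {y2 : Y2} {d : U1 × U2} (h : (y1, y2) ∈ fb Ψ1 Ψ2 d) :
    ∀ n, y1 ∈ gpow (Gam12 Ψ1 Ψ2) n y1 d := by
  intro n
  induction n with
  | zero => exact rfl
  | succ n ih =>
    simp only [gpow, mem_iUnion]
    exact ⟨y1, ih, mem_iUnion.2 ⟨y2, mem_iUnion.2 ⟨h.2, h.1⟩⟩⟩

lemma mem_gpow21 (Ψ1 : Y2 × U1 → Set Y1) (Ψ2 : Y1 × U2 → Set Y2)
    {y1 : Y1} {y2 : Y2} {d : U1 × U2} (h : (y1, y2) ∈ fb Ψ1 Ψ2 d) :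
    ∀ n, y2 ∈ gpow (Gam21 Ψ1 Ψ2) n y2 d := by
  intro n
  induction n with
  | zero => exact rfl
  | succ n ih =>
    simp only [gpow, mem_iUnion]
    exact ⟨y2, ih, mem_iUnion.2 ⟨y1, mem_iUnion.2 ⟨h.1, h.2⟩⟩⟩

theorem stmt18 (Ψ1 : Y2 × U1 → Set Y1) (Ψ2 : Y1 × U2 → Set Y2)
    (A : Set (Set (U1 × U2))) (B : Set (Set (Y1 × Y2)))
    (hsg : ∀ B' ∈ B, ∃ A' ∈ A, ∀ y : Y1 × Y2, y ∉ B' →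
      ∃ n1 ≥ 1, ∃ n2 ≥ 1,
        (gpowSet (Gam12 Ψ1 Ψ2) n1 y.1 A') ×ˢ (gpowSet (Gam21 Ψ1 Ψ2) n2 y.2 A')
          ⊆ B') :
    ∀ B' ∈ B, uinv (fb Ψ1 Ψ2) B' ∈ upcl A := by
  intro B' hB'
  obtain ⟨A', hA', hsg'⟩ := hsg B' hB'
  refine ⟨A', hA', fun d hd => ?_⟩
  intro y hy
  by_contra hyB
  obtain ⟨n1, _, n2, _, hsub⟩ := hsg' y hyB
  have h1 : y.1 ∈ gpowSet (Gam12 Ψ1 Ψ2) n1 y.1 A' :=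
    mem_iUnion.2 ⟨d, mem_iUnion.2 ⟨hd, mem_gpow12 Ψ1 Ψ2 hy n1⟩⟩
  have h2 : y.2 ∈ gpowSet (Gam21 Ψ1 Ψ2) n2 y.2 A' :=
    mem_iUnion.2 ⟨d, mem_iUnion.2 ⟨hd, mem_gpow21 Ψ1 Ψ2 hy n2⟩⟩
  exact hyB (hsub ⟨h1, h2⟩)
end

section
/- (Fixed-point property of feedback loops) Let Ψ1 : Y2 × U1 ⇉ Y1 and Ψ2 : Y1 × U2 ⇉ Y2, D = U1 × U2, and let Ψ, Υ1, Υ2, Γ_{ij}^n be defined as for the feedback interconnection. Then for every subset A ⊆ D, every y1 ∈ Υ1(A), and every n ≥ 1, it holds that y1 ∈ Γ12^n(y1, A) (and symmetrically y2 ∈ Γ21^n(y2, A) for y2 ∈ Υ2(A)). -/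
open Set

variable {Y1 Y2 U1 U2 : Type*}

lemma gpow_self {Y P : Type*} (Γ : Y → P → Set Y) (y : Y) (d : P)
    (h : y ∈ Γ y d) : ∀ n ≥ 1, y ∈ gpow Γ n y d := by
  intro n hn
  induction n with
  | zero => omega
  | succ m ih =>
    rcases Nat.lt_or_ge m 1 with h1 | h1
    · interval_cases m; simp [gpow]; exact h
    · have hm : y ∈ gpow Γ m y d := ih (by omega)
      exact Set.mem_biUnion hm h

theorem stmt19 (Ψ1 : Y2 × U1 → Set Y1) (Ψ2 : Y1 × U2 → Set Y2)
    (A : Set (U1 × U2)) :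
    (∀ y1 ∈ Ups1 Ψ1 Ψ2 A, ∀ n ≥ 1, y1 ∈ gpowSet (Gam12 Ψ1 Ψ2) n y1 A) ∧
    (∀ y2 ∈ Ups2 Ψ1 Ψ2 A, ∀ n ≥ 1, y2 ∈ gpowSet (Gam21 Ψ1 Ψ2) n y2 A) := by
  constructor
  · rintro y1 ⟨d, hd, y2, h1, h2⟩ n hn
    refine Set.mem_biUnion hd (gpow_self _ _ _ ?_ n hn)
    exact Set.mem_biUnion h2 h1
  · rintro y2 ⟨d, hd, y1, h1, h2⟩ n hn
    refine Set.mem_biUnion hd (gpow_self _ _ _ ?_ n hn)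
    exact Set.mem_biUnion h1 h2
end
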